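/- Fix u ≥ 1 and x with x < −u. There exists ε > 0 such that for every real p with 0 < |p| < ε and every y > 1 satisfying (−u−x)^p − (u−x)^p = (y−1)^p − (y+1)^p, one has y < 2·(−x/u) + 3. -/

import Mathlib

open Real Set Filter Topology

lemma hd_rpow (t : ℝ) (ht : 0 < t) : HasDerivAt (fun p : ℝ => t ^ p) (Real.log t) 0 := by
  have h : (fun p : ℝ => t ^ p) = fun p => Real.exp (Real.log t * p) :=
    funext fun p => Real.rpow_def_of_pos ht p
  rw [h]
  simpa using (((hasDerivAt_id (0:ℝ)).const_mul (Real.log t)).exp)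

lemma aux_anti (p s t : ℝ) (hp1 : p ≤ 1) (hs : 0 < s) (hst : s ≤ t) :
    ((t+2) ^ p - t ^ p) / p ≤ ((s+2) ^ p - s ^ p) / p := by
  rcases eq_or_ne p 0 with rfl | hp0
  · simp
  have hD : Convex ℝ (Ici s) := convex_Ici s
  set g : ℝ → ℝ := fun t => ((t+2) ^ p - t ^ p) / p with hg
  have hderiv : ∀ z : ℝ, 0 < z → HasDerivAt g (((z+2) ^ (p-1) - z ^ (p-1))) z := by
    intro z hz0
    have h1 : HasDerivAt (fun w : ℝ => w ^ p) (p * z ^ (p-1)) z :=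
      Real.hasDerivAt_rpow_const (Or.inl hz0.ne')
    have h2 : HasDerivAt (fun w : ℝ => (w+2) ^ p) (p * (z+2) ^ (p-1)) z := by
      have inner : HasDerivAt (fun w : ℝ => w + 2) 1 z := (hasDerivAt_id z).add_const 2
      have := inner.rpow_const (p := p) (Or.inl (by show z + 2 ≠ 0; positivity))
      simpa using this
    have := (h2.sub h1).div_const p
    refine this.congr_deriv ?_
    rw [div_eq_iff hp0]
    ring
  have hanti : AntitoneOn g (Ici s) := by
    apply antitoneOn_of_deriv_nonpos hD
    · intro z hz
      exact ((hderiv z (lt_of_lt_of_le hs hz)).continuousAt).continuousWithinAt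
    · intro z hz
      rw [interior_Ici] at hz
      exact (hderiv z (hs.trans hz)).differentiableAt.differentiableWithinAt
    · intro z hz
      rw [interior_Ici] at hz
      have hz0 : 0 < z := hs.trans hz
      rw [(hderiv z hz0).deriv]
      have : (z+2) ^ (p-1) ≤ z ^ (p-1) :=
        Real.rpow_le_rpow_of_nonpos hz0 (by linarith) (by linarith)
      linarith
  exact hanti (self_mem_Ici) hst hst

/-- in cell S₁ (`x < −u`, `y > 1`), for all `p` close enough to `0`
every bisector point on the vertical line at `x` satisfies `y < 2·s(x) + 3`, where
`s(x) = −x/u`. -/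
theorem stmt14 (u x : ℝ) (hu : 1 ≤ u) (hx : x < -u) :
    ∃ ε > (0:ℝ), ∀ p : ℝ, 0 < |p| → |p| < ε → ∀ y : ℝ, 1 < y →
      (-u - x) ^ p - (u - x) ^ p = (y - 1) ^ p - (y + 1) ^ p →
      y < 2 * (-x / u) + 3 := by
  have hu0 : 0 < u := by linarith
  set s : ℝ := -x / u with hs_def
  have hs1 : 1 < s := (one_lt_div hu0).mpr (by linarith)
  have hxs : -x = s * u := by rw [hs_def, div_mul_cancel₀ _ hu0.ne']
  set A : ℝ := -u - x with hA_def
  set B : ℝ := u - x with hB_def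
  have hA : 0 < A := by linarith
  have hB : 0 < B := by linarith
  set M : ℝ := 2 * s + 3 with hM_def
  have hM1 : 0 < M - 1 := by linarith
  have hM2 : 0 < M + 1 := by linarith
  -- the key derivative
  set δ : ℝ := Real.log B - Real.log A - (Real.log (M+1) - Real.log (M-1)) with hδ_def
  have hδpos : 0 < δ := by
    have key : A * (M+1) < B * (M-1) := by nlinarith [hs1, hu0, hxs]
    have h1 : Real.log (A * (M+1)) < Real.log (B * (M-1)) :=
      Real.log_lt_log (by positivity) key
    rw [Real.log_mul hA.ne' hM2.ne', Real.log_mul hB.ne' hM1.ne'] at h1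
    simp only [hδ_def]; linarith
  set K : ℝ → ℝ := fun p => B ^ p - A ^ p - ((M+1) ^ p - (M-1) ^ p) with hK_def
  have hK : HasDerivAt K δ 0 :=
    ((hd_rpow B hB).sub (hd_rpow A hA)).sub ((hd_rpow (M+1) hM2).sub (hd_rpow (M-1) hM1))
  have hslope := hasDerivAt_iff_tendsto_slope.mp hK
  have hev : ∀ᶠ p in 𝓝[≠] (0:ℝ), 0 < slope K 0 p :=
    hslope.eventually (eventually_gt_nhds hδpos)
  rw [eventually_nhdsWithin_iff, Metric.eventually_nhds_iff] at hev
  obtain ⟨ε, hε, hevs⟩ := hev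
  refine ⟨min ε 1, by positivity, ?_⟩
  intro p hp0 hpε y hy heq
  have hpne : p ≠ 0 := by intro h; rw [h] at hp0; simp at hp0
  have hpε' : |p| < ε := lt_of_lt_of_le hpε (min_le_left _ _)
  have hp1 : p ≤ 1 := le_of_lt (lt_of_le_of_lt (le_abs_self p) (lt_of_lt_of_le hpε (min_le_right _ _)))
  have hKp : 0 < K p / p := by
    have := hevs (show dist p 0 < ε by simpa [Real.dist_eq] using hpε') hpne
    simpa [slope_def_field, div_eq_iff, K] using this
  by_contra hcon
  push_neg at hcon
  -- hcon : 2 * (-x/u) + 3 ≤ y, i.e. M ≤ y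
  have hMy : M ≤ y := by simpa [hM_def, hs_def] using hcon
  have haux := aux_anti p (M-1) (y-1) hp1 hM1 (by linarith)
  have haux' : ((y+1) ^ p - (y-1) ^ p) / p ≤ ((M+1) ^ p - (M-1) ^ p) / p := by
    have e1 : y - 1 + 2 = y + 1 := by ring
    have e2 : M - 1 + 2 = M + 1 := by ring
    rwa [e1, e2] at haux
  rcases hpne.lt_or_gt with hneg | hpos
  · -- p < 0 : K p < 0
    have hKneg : K p < 0 := by
      rcases div_pos_iff.mp hKp with ⟨h1, h2⟩ | ⟨h1, h2⟩
      · linarith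
      · exact h1
    have hmul : (M+1) ^ p - (M-1) ^ p ≤ (y+1) ^ p - (y-1) ^ p := by
      have h := mul_le_mul_of_nonpos_left haux' (le_of_lt hneg)
      calc (M+1) ^ p - (M-1) ^ p = p * (((M+1) ^ p - (M-1) ^ p) / p) := by field_simp
        _ ≤ p * (((y+1) ^ p - (y-1) ^ p) / p) := h
        _ = (y+1) ^ p - (y-1) ^ p := by field_simp
    simp only [hK_def] at hKneg
    have heq' : A ^ p - B ^ p = (y-1) ^ p - (y+1) ^ p := heq
    linarith
  · -- p > 0 : K p > 0
    have hKpos : 0 < K p := by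
      rcases div_pos_iff.mp hKp with ⟨h1, h2⟩ | ⟨h1, h2⟩
      · exact h1
      · linarith
    have hmul : (y+1) ^ p - (y-1) ^ p ≤ (M+1) ^ p - (M-1) ^ p := by
      have := mul_le_mul_of_nonneg_left haux' (le_of_lt hpos)
      calc (y+1) ^ p - (y-1) ^ p = p * (((y+1) ^ p - (y-1) ^ p) / p) := by field_simp
        _ ≤ p * (((M+1) ^ p - (M-1) ^ p) / p) := this
        _ = (M+1) ^ p - (M-1) ^ p := by field_simp
    simp only [hK_def] at hKpos
    have heq' : A ^ p - B ^ p = (y-1) ^ p - (y+1) ^ p := heq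
    linarith
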